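/- The logistic map L(x) = 4x(1−x) on [0,1] has a dense set of periodic points. -/

import Mathlib

open Real

lemma logistic_iter_sin_sq (k : ℕ) (θ : ℝ) :
    (fun t : ℝ => 4 * t * (1 - t))^[k] (Real.sin θ ^ 2) = Real.sin (2 ^ k * θ) ^ 2 := by
  induction k generalizing θ with
  | zero => simp
  | succ n ih =>
      rw [Function.iterate_succ_apply]
      have h1 : 4 * Real.sin θ ^ 2 * (1 - Real.sin θ ^ 2) = Real.sin (2 * θ) ^ 2 := by
        have hc := Real.sin_sq_add_cos_sq θ
        rw [Real.sin_two_mul]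
        nlinarith [hc]
      show (fun t : ℝ => 4 * t * (1 - t))^[n] (4 * Real.sin θ ^ 2 * (1 - Real.sin θ ^ 2))
          = Real.sin (2 ^ (n + 1) * θ) ^ 2
      rw [h1, ih (2 * θ)]
      congr 2
      ring

/-- the logistic map has dense periodic points in [0,1]. -/
theorem logistic_dense_periodic :
    ∀ x ∈ Set.Icc (0:ℝ) 1, ∀ ε > 0, ∃ p ∈ Set.Icc (0:ℝ) 1,
      |p - x| < ε ∧ ∃ k ≥ 1, (fun t : ℝ => 4 * t * (1 - t))^[k] p = p := by
  intro x hx ε hε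
  have hπ := Real.pi_pos
  set θ0 := Real.arcsin (Real.sqrt x) with hθ0def
  have hsin : Real.sin θ0 = Real.sqrt x :=
    Real.sin_arcsin (le_trans (by norm_num) (Real.sqrt_nonneg x)) (Real.sqrt_le_one.mpr hx.2)
  have hsinsq : Real.sin θ0 ^ 2 = x := by rw [hsin, Real.sq_sqrt hx.1]
  obtain ⟨k, hk⟩ := pow_unbounded_of_one_lt (2 * π / ε + 1) (one_lt_two (α := ℝ))
  have hquot : 0 < 2 * π / ε := by positivity
  have hN1 : (1:ℝ) < 2 ^ k := by linarith
  set N : ℝ := 2 ^ k - 1 with hNdef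
  have hNpos : 0 < N := by simp only [hNdef]; linarith
  have hNbig : 2 * π / ε < N := by simp only [hNdef]; linarith
  have hk1 : 1 ≤ k := by
    rcases Nat.eq_zero_or_pos k with h | h
    · exfalso; rw [h] at hN1; norm_num at hN1
    · exact h
  set j : ℤ := ⌊θ0 * N / π⌋ with hjdef
  set θ : ℝ := π * j / N with hθdef
  have hfl : (j : ℝ) * π ≤ θ0 * N := by
    have h := Int.floor_le (θ0 * N / π)
    rw [← hjdef, le_div_iff₀ hπ] at h
    linarith
  have hfl2 : θ0 * N < ((j : ℝ) + 1) * π := by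
    have h := Int.lt_floor_add_one (θ0 * N / π)
    rw [← hjdef, div_lt_iff₀ hπ] at h
    linarith
  have hθN : θ * N = π * j := by
    rw [hθdef, div_mul_cancel₀ _ (ne_of_gt hNpos)]
  have key : (θ0 - θ) * N < π := by nlinarith
  have key0 : 0 ≤ (θ0 - θ) * N := by nlinarith
  have key2 : 2 * π < ε * N := by
    rw [div_lt_iff₀ hε] at hNbig; linarith [hNbig]
  have hθle : θ ≤ θ0 := by nlinarith
  have hdist : |θ - θ0| < ε / 2 := by
    rw [abs_sub_comm, abs_of_nonneg (by linarith)]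
    nlinarith
  refine ⟨Real.sin θ ^ 2, ⟨sq_nonneg _, Real.sin_sq_le_one θ⟩, ?_, k, hk1, ?_⟩
  · -- |sin θ ^ 2 - x| < ε
    have hfac : Real.sin θ ^ 2 - x = Real.sin (θ + θ0) * Real.sin (θ - θ0) := by
      rw [← hsinsq, Real.sin_add, Real.sin_sub]
      nlinarith [Real.sin_sq_add_cos_sq θ, Real.sin_sq_add_cos_sq θ0]
    rw [hfac, abs_mul]
    calc |Real.sin (θ + θ0)| * |Real.sin (θ - θ0)|
        ≤ 1 * |θ - θ0| := by
          exact mul_le_mul (Real.abs_sin_le_one _) (Real.abs_sin_le_abs)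
            (abs_nonneg _) (by norm_num)
      _ < ε := by rw [one_mul]; linarith
  · -- periodicity
    rw [logistic_iter_sin_sq]
    have harg : (2:ℝ) ^ k * θ = θ + j * π := by
      have hNne : N ≠ 0 := ne_of_gt hNpos
      rw [hθdef, hNdef]
      have hNne' : (2:ℝ) ^ k - 1 ≠ 0 := hNne
      field_simp
      ring
    rw [harg, Real.sin_add_int_mul_pi]
    rcases Int.even_or_odd j with he | ho
    · rw [he.neg_one_zpow]; ring
    · rw [ho.neg_one_zpow]; ring
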